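/- There exists a constant c > 0 such that for all ε ∈ (0,1] and all t ≥ 0, ∫₀^t (1 + t - s)^{-3/2} (1 + εs)^{-3/2} ds ≤ c (1 + εt)^{-3/2}. -/

import Mathlib

open Real

lemma aux_contOn (d k : ℝ) (p : ℝ) {S : Set ℝ} (h : ∀ s ∈ S, 0 < d + k * s) :
    ContinuousOn (fun s => (d + k * s) ^ p) S := by
  apply ContinuousOn.rpow_const (by fun_prop) (fun x hx => Or.inl (h x hx).ne')

lemma aux_ftc (d k a b : ℝ) (hk : k ≠ 0) (hpos : ∀ s ∈ Set.uIcc a b, 0 < d + k * s) :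
    ∫ s in a..b, (d + k * s) ^ (-(3/2) : ℝ)
      = (2 / k) * ((d + k * a) ^ (-(1/2) : ℝ) - (d + k * b) ^ (-(1/2) : ℝ)) := by
  have key : ∀ x ∈ Set.uIcc a b,
      HasDerivAt (fun s => (-(2 / k)) * (d + k * s) ^ (-(1/2) : ℝ))
        ((d + k * x) ^ (-(3/2) : ℝ)) x := by
    intro x hx
    have h1 : HasDerivAt (fun s : ℝ => d + k * s) k x := by
      simpa using ((hasDerivAt_id x).const_mul k).const_add d
    have h2 := (h1.rpow_const (p := (-(1/2) : ℝ)) (Or.inl (hpos x hx).ne'))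
    have h3 := h2.const_mul (-(2 / k))
    refine h3.congr_deriv ?_
    have : (-(1/2) : ℝ) - 1 = -(3/2) := by norm_num
    rw [this]
    field_simp
  have hint : IntervalIntegrable (fun s => (d + k * s) ^ (-(3/2) : ℝ)) MeasureTheory.volume a b :=
    (aux_contOn d k _ hpos).intervalIntegrable
  rw [intervalIntegral.integral_eq_sub_of_hasDerivAt key hint]
  ring

lemma aux_bound1 (ε a b : ℝ) (hε : 0 < ε) (hab : a ≤ b) (ha : 0 ≤ a) :
    ∫ s in a..b, (1 + ε * s) ^ (-(3/2) : ℝ) ≤ 2 / ε * (1 + ε * a) ^ (-(1/2) : ℝ) := by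
  have hpos : ∀ s ∈ Set.uIcc a b, 0 < 1 + ε * s := by
    intro s hs
    rw [Set.uIcc_of_le hab] at hs
    nlinarith [hs.1, mul_nonneg hε.le (ha.trans hs.1)]
  rw [aux_ftc 1 ε a b hε.ne' hpos]
  have h1 : (0:ℝ) ≤ (1 + ε * b) ^ (-(1/2) : ℝ) := by
    apply Real.rpow_nonneg; nlinarith [mul_nonneg hε.le (ha.trans hab)]
  have h2 : (0:ℝ) ≤ 2 / ε := by positivity
  nlinarith

lemma aux_bound2 (t a b : ℝ) (hab : a ≤ b) (hbt : b ≤ t) (ha : 0 ≤ a) :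
    ∫ s in a..b, (1 + t - s) ^ (-(3/2) : ℝ) ≤ 2 := by
  have hrw : ∀ s : ℝ, 1 + t - s = (1 + t) + (-1) * s := by intro s; ring
  have hpos : ∀ s ∈ Set.uIcc a b, 0 < (1 + t) + (-1) * s := by
    intro s hs
    rw [Set.uIcc_of_le hab] at hs
    nlinarith [hs.2]
  calc ∫ s in a..b, (1 + t - s) ^ (-(3/2) : ℝ)
      = ∫ s in a..b, ((1 + t) + (-1) * s) ^ (-(3/2) : ℝ) := by
        congr 1; ext s; rw [hrw]
    _ = (2 / (-1)) * (((1 + t) + (-1) * a) ^ (-(1/2) : ℝ)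
          - ((1 + t) + (-1) * b) ^ (-(1/2) : ℝ)) := aux_ftc _ _ _ _ (by norm_num) hpos
    _ ≤ 2 := by
        have h1 : ((1 + t) + (-1) * b) ^ (-(1/2) : ℝ) ≤ 1 :=
          Real.rpow_le_one_of_one_le_of_nonpos (by linarith) (by norm_num)
        have h2 : (0:ℝ) ≤ ((1 + t) + (-1) * a) ^ (-(1/2) : ℝ) := by
          apply Real.rpow_nonneg; nlinarith
        nlinarith

lemma two_rpow_le : (2:ℝ) ^ ((3:ℝ)/2) ≤ 4 := by
  have h := Real.rpow_le_rpow_of_exponent_le (x := 2) (by norm_num)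
    (show (3:ℝ)/2 ≤ (2:ℕ) by norm_num)
  rwa [Real.rpow_natCast, show ((2:ℝ)^(2:ℕ)) = 4 by norm_num] at h

lemma four_rpow : (4:ℝ) ^ ((3:ℝ)/2) = 8 := by
  rw [show (4:ℝ) = 2 ^ (2:ℝ) by rw [show (2:ℝ) = ((2:ℕ):ℝ) by norm_num, Real.rpow_natCast]; norm_num,
    ← Real.rpow_mul (by norm_num)]
  rw [show (2:ℝ) * ((3:ℝ)/2) = ((3:ℕ):ℝ) by norm_num, Real.rpow_natCast]
  norm_num

lemma aux_arith (A B D ε : ℝ) (hA : 0 < A) (hB : 0 < B) (hD : 0 < D) (hε : 0 < ε)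
    (h1 : B ≤ 8 * (ε * A)) (h2 : B ≤ 4 * D) :
    A⁻¹ * (2/ε) + D⁻¹ * 2 ≤ 100 * B⁻¹ := by
  have e1 : A⁻¹ * (2/ε) ≤ 32 * B⁻¹ := by
    rw [show A⁻¹ * (2/ε) = 2/(ε*A) by field_simp,
      show (32:ℝ) * B⁻¹ = 32 / B by rw [div_eq_mul_inv],
      div_le_div_iff₀ (by positivity) hB]
    nlinarith
  have e2 : D⁻¹ * 2 ≤ 8 * B⁻¹ := by
    rw [show D⁻¹ * 2 = 2/D by rw [div_eq_mul_inv]; ring,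
      show (8:ℝ) * B⁻¹ = 8 / B by rw [div_eq_mul_inv],
      div_le_div_iff₀ hD hB]
    nlinarith
  have hBinv : (0:ℝ) ≤ B⁻¹ := by positivity
  linarith

set_option maxHeartbeats 1000000 in
theorem convolution_decay_estimate :
    ∃ c : ℝ, 0 < c ∧ ∀ ε : ℝ, 0 < ε → ε ≤ 1 → ∀ t : ℝ, 0 ≤ t →
      (∫ s in (0:ℝ)..t, (1 + t - s) ^ (-(3/2) : ℝ) * (1 + ε * s) ^ (-(3/2) : ℝ))
        ≤ c * (1 + ε * t) ^ (-(3/2) : ℝ) := by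
  refine ⟨100, by norm_num, fun ε hε hε1 t ht => ?_⟩
  have hεt : 0 ≤ ε * t := mul_nonneg hε.le ht
  have hBpos : (0:ℝ) < (1 + ε * t) ^ ((3:ℝ)/2) := Real.rpow_pos_of_pos (by linarith) _
  have hBrw : (1 + ε * t) ^ (-(3/2) : ℝ) = ((1 + ε * t) ^ ((3:ℝ)/2))⁻¹ :=
    Real.rpow_neg (by linarith) _
  -- continuity of the product integrand on [0,t]
  have hcont : ContinuousOn
      (fun s => (1 + t - s) ^ (-(3/2) : ℝ) * (1 + ε * s) ^ (-(3/2) : ℝ)) (Set.Icc 0 t) := by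
    have c1 : ContinuousOn (fun s => ((1 + t) + (-1) * s) ^ (-(3/2) : ℝ)) (Set.Icc 0 t) :=
      aux_contOn _ _ _ (fun s hs => by nlinarith [hs.2])
    have c2 : ContinuousOn (fun s => (1 + ε * s) ^ (-(3/2) : ℝ)) (Set.Icc 0 t) :=
      aux_contOn 1 ε _ (fun s hs => by nlinarith [hs.1])
    have : ContinuousOn (fun s => ((1+t) + (-1) * s) ^ (-(3/2) : ℝ) * (1 + ε * s) ^ (-(3/2) : ℝ))
        (Set.Icc 0 t) := c1.mul c2
    convert this using 2 with s
    ring_nf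
  rcases le_or_gt (ε * t) 1 with hcase | hcase
  · -- small εt: whole integral ≤ 2 ≤ 100 (1+εt)^{-3/2}
    have hint1 : IntervalIntegrable
        (fun s => (1 + t - s) ^ (-(3/2) : ℝ) * (1 + ε * s) ^ (-(3/2) : ℝ))
        MeasureTheory.volume 0 t := by
      apply ContinuousOn.intervalIntegrable
      rwa [Set.uIcc_of_le ht]
    have hint2 : IntervalIntegrable (fun s => (1 + t - s) ^ (-(3/2) : ℝ))
        MeasureTheory.volume 0 t := by
      apply ContinuousOn.intervalIntegrable
      rw [Set.uIcc_of_le ht]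
      have := aux_contOn (1+t) (-1) (-(3/2) : ℝ) (S := Set.Icc 0 t)
        (fun s hs => by nlinarith [hs.2])
      convert this using 2 with s; ring_nf
    have hmono : (∫ s in (0:ℝ)..t, (1 + t - s) ^ (-(3/2) : ℝ) * (1 + ε * s) ^ (-(3/2) : ℝ))
        ≤ ∫ s in (0:ℝ)..t, (1 + t - s) ^ (-(3/2) : ℝ) := by
      apply intervalIntegral.integral_mono_on ht hint1 hint2
      intro s hs
      have hg : (1 + ε * s) ^ (-(3/2) : ℝ) ≤ 1 :=
        Real.rpow_le_one_of_one_le_of_nonpos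
          (by nlinarith [hs.1, mul_nonneg hε.le hs.1]) (by norm_num)
      have hf : (0:ℝ) ≤ (1 + t - s) ^ (-(3/2) : ℝ) :=
        Real.rpow_nonneg (by nlinarith [hs.2]) _
      nlinarith
    have h2 : (∫ s in (0:ℝ)..t, (1 + t - s) ^ (-(3/2) : ℝ)) ≤ 2 :=
      aux_bound2 t 0 t ht le_rfl le_rfl
    have hB4 : (1 + ε * t) ^ ((3:ℝ)/2) ≤ 4 := by
      calc (1 + ε * t) ^ ((3:ℝ)/2) ≤ (2:ℝ) ^ ((3:ℝ)/2) :=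
            Real.rpow_le_rpow (by linarith) (by linarith) (by norm_num)
        _ ≤ 4 := two_rpow_le
    have : (2:ℝ) ≤ 100 * ((1 + ε * t) ^ ((3:ℝ)/2))⁻¹ := by
      rw [← div_eq_mul_inv, le_div_iff₀ hBpos]; nlinarith
    rw [hBrw]; linarith
  · -- large εt: split at t/2
    have ht2 : 0 ≤ t / 2 := by linarith
    have htt : t / 2 ≤ t := by linarith
    have ht1 : 1 < t := by nlinarith
    have hintOn : ∀ a b : ℝ, 0 ≤ a → a ≤ b → b ≤ t → IntervalIntegrable
        (fun s => (1 + t - s) ^ (-(3/2) : ℝ) * (1 + ε * s) ^ (-(3/2) : ℝ))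
        MeasureTheory.volume a b := by
      intro a b ha hab hbt
      apply ContinuousOn.intervalIntegrable
      apply hcont.mono
      rw [Set.uIcc_of_le hab]
      exact Set.Icc_subset_Icc ha hbt
    have hsplit := intervalIntegral.integral_add_adjacent_intervals
      (hintOn 0 (t/2) le_rfl ht2 htt) (hintOn (t/2) t ht2 htt le_rfl)
    -- piece 1
    have hApos : (0:ℝ) < (1 + t/2) ^ ((3:ℝ)/2) := Real.rpow_pos_of_pos (by linarith) _
    have hI1 : (∫ s in (0:ℝ)..(t/2), (1 + t - s) ^ (-(3/2) : ℝ) * (1 + ε * s) ^ (-(3/2) : ℝ))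
        ≤ (1 + t/2) ^ (-(3/2) : ℝ) * (2 / ε) := by
      have step1 : (∫ s in (0:ℝ)..(t/2), (1 + t - s) ^ (-(3/2) : ℝ) * (1 + ε * s) ^ (-(3/2) : ℝ))
          ≤ ∫ s in (0:ℝ)..(t/2), (1 + t/2) ^ (-(3/2) : ℝ) * (1 + ε * s) ^ (-(3/2) : ℝ) := by
        have hgint : IntervalIntegrable (fun s => (1 + ε * s) ^ (-(3/2) : ℝ))
            MeasureTheory.volume 0 (t/2) := by
          apply ContinuousOn.intervalIntegrable
          apply aux_contOn
          intro s hs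
          rw [Set.uIcc_of_le ht2] at hs
          nlinarith [hs.1, mul_nonneg hε.le hs.1]
        apply intervalIntegral.integral_mono_on ht2 (hintOn 0 (t/2) le_rfl ht2 htt)
          (hgint.const_mul _)
        intro s hs
        have hf : (1 + t - s) ^ (-(3/2) : ℝ) ≤ (1 + t/2) ^ (-(3/2) : ℝ) :=
          Real.rpow_le_rpow_of_nonpos (by linarith) (by linarith [hs.2]) (by norm_num)
        have hg : (0:ℝ) ≤ (1 + ε * s) ^ (-(3/2) : ℝ) :=
          Real.rpow_nonneg (by nlinarith [hs.1, mul_nonneg hε.le hs.1]) _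
        exact mul_le_mul_of_nonneg_right hf hg
      rw [intervalIntegral.integral_const_mul] at step1
      have step2 : (∫ s in (0:ℝ)..(t/2), (1 + ε * s) ^ (-(3/2) : ℝ)) ≤ 2 / ε := by
        have := aux_bound1 ε 0 (t/2) hε ht2 le_rfl
        simpa using this
      have hK : (0:ℝ) ≤ (1 + t/2) ^ (-(3/2) : ℝ) := Real.rpow_nonneg (by linarith) _
      calc _ ≤ (1 + t/2) ^ (-(3/2) : ℝ) * ∫ s in (0:ℝ)..(t/2), (1 + ε * s) ^ (-(3/2) : ℝ) := step1
        _ ≤ (1 + t/2) ^ (-(3/2) : ℝ) * (2/ε) := mul_le_mul_of_nonneg_left step2 hK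
    -- piece 2
    have hDpos : (0:ℝ) < (1 + ε * (t/2)) ^ ((3:ℝ)/2) := by
      apply Real.rpow_pos_of_pos; nlinarith [mul_nonneg hε.le ht2]
    have hI2 : (∫ s in (t/2)..t, (1 + t - s) ^ (-(3/2) : ℝ) * (1 + ε * s) ^ (-(3/2) : ℝ))
        ≤ (1 + ε * (t/2)) ^ (-(3/2) : ℝ) * 2 := by
      have step1 : (∫ s in (t/2)..t, (1 + t - s) ^ (-(3/2) : ℝ) * (1 + ε * s) ^ (-(3/2) : ℝ))
          ≤ ∫ s in (t/2)..t, (1 + ε * (t/2)) ^ (-(3/2) : ℝ) * (1 + t - s) ^ (-(3/2) : ℝ) := by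
        have hfint : IntervalIntegrable (fun s => (1 + t - s) ^ (-(3/2) : ℝ))
            MeasureTheory.volume (t/2) t := by
          apply ContinuousOn.intervalIntegrable
          have hc : ContinuousOn (fun s => ((1+t) + (-1) * s) ^ (-(3/2) : ℝ))
              (Set.uIcc (t/2) t) := aux_contOn _ _ _ (fun s hs => by
            rw [Set.uIcc_of_le htt] at hs; nlinarith [hs.2])
          convert hc using 2 with s
          ring_nf
        apply intervalIntegral.integral_mono_on htt (hintOn (t/2) t ht2 htt le_rfl)
          (hfint.const_mul _)
        intro s hs
        have hg : (1 + ε * s) ^ (-(3/2) : ℝ) ≤ (1 + ε * (t/2)) ^ (-(3/2) : ℝ) := by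
          apply Real.rpow_le_rpow_of_nonpos
          · nlinarith [mul_nonneg hε.le ht2]
          · nlinarith [hs.1, mul_le_mul_of_nonneg_left hs.1 hε.le]
          · norm_num
        have hf : (0:ℝ) ≤ (1 + t - s) ^ (-(3/2) : ℝ) :=
          Real.rpow_nonneg (by nlinarith [hs.2]) _
        calc (1 + t - s) ^ (-(3/2) : ℝ) * (1 + ε * s) ^ (-(3/2) : ℝ)
            ≤ (1 + t - s) ^ (-(3/2) : ℝ) * (1 + ε * (t/2)) ^ (-(3/2) : ℝ) :=
              mul_le_mul_of_nonneg_left hg hf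
          _ = (1 + ε * (t/2)) ^ (-(3/2) : ℝ) * (1 + t - s) ^ (-(3/2) : ℝ) := by ring
      rw [intervalIntegral.integral_const_mul] at step1
      have step2 := aux_bound2 t (t/2) t htt le_rfl ht2
      have hK : (0:ℝ) ≤ (1 + ε * (t/2)) ^ (-(3/2) : ℝ) := by
        apply Real.rpow_nonneg; nlinarith [mul_nonneg hε.le ht2]
      calc _ ≤ (1 + ε * (t/2)) ^ (-(3/2) : ℝ) * ∫ s in (t/2)..t, (1 + t - s) ^ (-(3/2) : ℝ) := step1
        _ ≤ (1 + ε * (t/2)) ^ (-(3/2) : ℝ) * 2 := mul_le_mul_of_nonneg_left step2 hK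
    -- final arithmetic
    have hArw : (1 + t/2) ^ (-(3/2) : ℝ) = ((1 + t/2) ^ ((3:ℝ)/2))⁻¹ :=
      Real.rpow_neg (by linarith) _
    have hDrw : (1 + ε * (t/2)) ^ (-(3/2) : ℝ) = ((1 + ε * (t/2)) ^ ((3:ℝ)/2))⁻¹ :=
      Real.rpow_neg (by nlinarith [mul_nonneg hε.le ht2]) _
    -- B ≤ 8 ε A
    have hB8 : (1 + ε * t) ^ ((3:ℝ)/2) ≤ 8 * (ε * (1 + t/2) ^ ((3:ℝ)/2)) := by
      have h1 : 1 + ε * t ≤ 4 * ε * (1 + t/2) := by nlinarith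
      have h2 : (1 + ε * t) ^ ((3:ℝ)/2) ≤ (4 * ε * (1 + t/2)) ^ ((3:ℝ)/2) :=
        Real.rpow_le_rpow (by linarith) h1 (by norm_num)
      have h3 : (4 * ε * (1 + t/2)) ^ ((3:ℝ)/2)
          = (4:ℝ) ^ ((3:ℝ)/2) * ε ^ ((3:ℝ)/2) * (1 + t/2) ^ ((3:ℝ)/2) := by
        rw [Real.mul_rpow (by positivity) (by linarith),
          Real.mul_rpow (by norm_num) hε.le]
      have h4 : ε ^ ((3:ℝ)/2) ≤ ε := by
        have := Real.rpow_le_rpow_of_exponent_ge hε hε1 (show (1:ℝ) ≤ (3:ℝ)/2 by norm_num)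
        rwa [Real.rpow_one] at this
      calc (1 + ε * t) ^ ((3:ℝ)/2) ≤ (4 * ε * (1 + t/2)) ^ ((3:ℝ)/2) := h2
        _ = (4:ℝ) ^ ((3:ℝ)/2) * ε ^ ((3:ℝ)/2) * (1 + t/2) ^ ((3:ℝ)/2) := h3
        _ = 8 * ε ^ ((3:ℝ)/2) * (1 + t/2) ^ ((3:ℝ)/2) := by rw [four_rpow]
        _ ≤ 8 * (ε * (1 + t/2) ^ ((3:ℝ)/2)) := by nlinarith [hApos, h4]
    -- B ≤ 4 D
    have hB4D : (1 + ε * t) ^ ((3:ℝ)/2) ≤ 4 * (1 + ε * (t/2)) ^ ((3:ℝ)/2) := by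
      have h1 : 1 + ε * t ≤ 2 * (1 + ε * (t/2)) := by nlinarith
      have h2 : (1 + ε * t) ^ ((3:ℝ)/2) ≤ (2 * (1 + ε * (t/2))) ^ ((3:ℝ)/2) :=
        Real.rpow_le_rpow (by linarith) h1 (by norm_num)
      have h3 : (2 * (1 + ε * (t/2))) ^ ((3:ℝ)/2)
          = (2:ℝ) ^ ((3:ℝ)/2) * (1 + ε * (t/2)) ^ ((3:ℝ)/2) :=
        Real.mul_rpow (by norm_num) (by nlinarith [mul_nonneg hε.le ht2])
      nlinarith [two_rpow_le, hDpos, Real.rpow_nonneg (show (0:ℝ) ≤ 2 by norm_num) ((3:ℝ)/2)]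
    have harith := aux_arith ((1 + t/2) ^ ((3:ℝ)/2)) ((1 + ε * t) ^ ((3:ℝ)/2))
      ((1 + ε * (t/2)) ^ ((3:ℝ)/2)) ε hApos hBpos hDpos hε hB8 hB4D
    rw [hBrw, ← hsplit]
    rw [hArw] at hI1
    rw [hDrw] at hI2
    linarith
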